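/- Let Λ > 0 and let r₃ < 0 < r₂ < r₁ be real numbers. Define f(r) = −(Λ/(3r))·(r − r₁)·(r − r₂)·(r − r₃), the elliptic modulus k by k² = (−r₃·(r₁ − r₂))/(r₁·(r₂ − r₃)), the amplitude φ(r) = arcsin(√(r₁·(r − r₂)/(r·(r₁ − r₂)))), the constant C_Λ = 2·√(3/Λ)/√(r₁·(r₂ − r₃)), and F(φ) = ∫_0^φ (1 − k²·sin²θ)^{−1/2} dθ. Then 0 < k² < 1, f(r) > 0 for all r ∈ (r₂, r₁), and for every r ∈ (r₂, r₁) the function r ↦ C_Λ·F(φ(r)) has derivative 1/(r·√(f(r))) at r. -/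

import Mathlib

open MeasureTheory Set Real

set_option maxHeartbeats 1000000 in
/-- Köttler (Schwarzschild–de Sitter) metric in the static region (r₂, r₁):
the elliptic modulus satisfies 0 < k² < 1, f > 0 on (r₂, r₁), and the function
r ↦ C_Λ F(φ(r)) has derivative 1/(r√(f r)) at every r ∈ (r₂, r₁). -/
theorem kottler_elliptic_derivative
    (Λ r₁ r₂ r₃ : ℝ) (hΛ : 0 < Λ) (h3 : r₃ < 0) (h2 : 0 < r₂) (h21 : r₂ < r₁)
    (f : ℝ → ℝ)
    (hf : ∀ r, f r = -(Λ / (3 * r)) * (r - r₁) * (r - r₂) * (r - r₃))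
    (k2 : ℝ) (hk2 : k2 = (-r₃ * (r₁ - r₂)) / (r₁ * (r₂ - r₃)))
    (φ : ℝ → ℝ)
    (hφ : ∀ r, φ r = Real.arcsin (Real.sqrt (r₁ * (r - r₂) / (r * (r₁ - r₂)))))
    (CΛ : ℝ) (hCΛ : CΛ = 2 * Real.sqrt (3 / Λ) / Real.sqrt (r₁ * (r₂ - r₃)))
    (F : ℝ → ℝ)
    (hF : ∀ φ₀ : ℝ, F φ₀ = ∫ θ in (0:ℝ)..φ₀, 1 / Real.sqrt (1 - k2 * Real.sin θ ^ 2)) :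
    (0 < k2 ∧ k2 < 1) ∧ (∀ r ∈ Set.Ioo r₂ r₁, 0 < f r) ∧
      ∀ r ∈ Set.Ioo r₂ r₁,
        HasDerivAt (fun s => CΛ * F (φ s)) (1 / (r * Real.sqrt (f r))) r := by
  have hr1pos : (0:ℝ) < r₁ := h2.trans h21
  have h12 : (0:ℝ) < r₁ - r₂ := by linarith
  have h23 : (0:ℝ) < r₂ - r₃ := by linarith
  have hk0 : 0 < k2 := by
    rw [hk2]; exact div_pos (mul_pos (by linarith) h12) (mul_pos hr1pos h23)
  have hk1 : k2 < 1 := by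
    rw [hk2, div_lt_one (mul_pos hr1pos h23)]; nlinarith
  refine ⟨⟨hk0, hk1⟩, ?_, ?_⟩
  · intro r hr
    have h1 : 0 < r₁ - r := by linarith [hr.2]
    have h2' : 0 < r - r₂ := by linarith [hr.1]
    have h3' : 0 < r - r₃ := by linarith [hr.1]
    have hr0 : 0 < r := h2.trans hr.1
    have hfr : f r = Λ / (3 * r) * ((r₁ - r) * ((r - r₂) * (r - r₃))) := by rw [hf]; ring
    rw [hfr]
    exact mul_pos (div_pos hΛ (by linarith)) (mul_pos h1 (mul_pos h2' h3'))
  · intro r hr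
    obtain ⟨hr2, hr1⟩ := hr
    have hr0 : 0 < r := h2.trans hr2
    have h1 : 0 < r₁ - r := by linarith
    have h2' : 0 < r - r₂ := by linarith
    have h3' : 0 < r - r₃ := by linarith
    have hfr : f r = Λ / (3 * r) * ((r₁ - r) * ((r - r₂) * (r - r₃))) := by rw [hf]; ring
    have hfr0 : 0 < f r := by
      rw [hfr]
      exact mul_pos (div_pos hΛ (by linarith)) (mul_pos h1 (mul_pos h2' h3'))
    -- integrand positivity and continuity
    have hpos : ∀ θ : ℝ, 0 < 1 - k2 * Real.sin θ ^ 2 := by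
      intro θ
      nlinarith [Real.sin_sq_le_one θ, sq_nonneg (Real.sin θ),
        mul_le_mul_of_nonneg_left (Real.sin_sq_le_one θ) hk0.le]
    set g : ℝ → ℝ := fun θ => 1 / Real.sqrt (1 - k2 * Real.sin θ ^ 2) with hg
    have hgcont : Continuous g := by
      apply continuous_const.div
      · exact Real.continuous_sqrt.comp (by continuity)
      · exact fun θ => (Real.sqrt_pos.2 (hpos θ)).ne'
    -- the inner rational function and its derivative
    set u : ℝ := r₁ * (r - r₂) / (r * (r₁ - r₂)) with hu
    have hu0 : 0 < u := div_pos (mul_pos hr1pos h2') (mul_pos hr0 h12)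
    have hu1 : u < 1 := by
      rw [hu, div_lt_one (mul_pos hr0 h12)]; nlinarith
    set du : ℝ := r₁ * r₂ / (r ^ 2 * (r₁ - r₂)) with hdu
    have hdu0 : 0 < du := div_pos (mul_pos hr1pos h2) (mul_pos (by positivity) h12)
    have hne : r * (r₁ - r₂) ≠ 0 := (mul_pos hr0 h12).ne'
    have hn : HasDerivAt (fun s : ℝ => r₁ * (s - r₂)) r₁ r := by
      simpa using ((hasDerivAt_id r).sub_const r₂).const_mul r₁
    have hd : HasDerivAt (fun s : ℝ => s * (r₁ - r₂)) (r₁ - r₂) r := by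
      simpa using (hasDerivAt_id r).mul_const (r₁ - r₂)
    have huD : HasDerivAt (fun s : ℝ => r₁ * (s - r₂) / (s * (r₁ - r₂))) du r := by
      have h := hn.div hd hne
      refine h.congr_deriv ?_
      rw [hdu]
      field_simp
      ring
    have hsD : HasDerivAt (fun s : ℝ => Real.sqrt (r₁ * (s - r₂) / (s * (r₁ - r₂))))
        (1 / (2 * Real.sqrt u) * du) r :=
      (Real.hasDerivAt_sqrt hu0.ne').comp r huD
    have hsu1 : Real.sqrt u < 1 := by
      rw [show (1:ℝ) = Real.sqrt 1 by simp]
      exact Real.sqrt_lt_sqrt hu0.le hu1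
    have hsunn : (0:ℝ) ≤ Real.sqrt u := Real.sqrt_nonneg u
    have harcD : HasDerivAt
        (fun s : ℝ => Real.arcsin (Real.sqrt (r₁ * (s - r₂) / (s * (r₁ - r₂)))))
        (1 / Real.sqrt (1 - Real.sqrt u ^ 2) * (1 / (2 * Real.sqrt u) * du)) r := by
      have ha := Real.hasDerivAt_arcsin (x := Real.sqrt u)
        ((lt_of_lt_of_le (by norm_num : (-1:ℝ) < 0) hsunn).ne') hsu1.ne
      exact ha.comp r hsD
    have hφf : φ = fun s : ℝ =>
        Real.arcsin (Real.sqrt (r₁ * (s - r₂) / (s * (r₁ - r₂)))) := funext hφ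
    have hφD : HasDerivAt φ
        (1 / Real.sqrt (1 - u) * (1 / (2 * Real.sqrt u) * du)) r := by
      rw [hφf]
      rwa [Real.sq_sqrt hu0.le] at harcD
    have hFf : F = fun x : ℝ => ∫ θ in (0:ℝ)..x, g θ := funext hF
    have hFD : HasDerivAt F (g (φ r)) (φ r) := by
      rw [hFf]
      exact intervalIntegral.integral_hasDerivAt_right
        (hgcont.intervalIntegrable _ _)
        hgcont.aestronglyMeasurable.stronglyMeasurableAtFilter
        hgcont.continuousAt
    have hcomp := (hFD.comp r hφD).const_mul CΛ
    -- compute the value of the derivative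
    have hsin : Real.sin (φ r) = Real.sqrt u := by
      rw [hφ r]
      exact Real.sin_arcsin (by linarith) hsu1.le
    have hgval : g (φ r) = 1 / Real.sqrt (1 - k2 * u) := by
      rw [hg]
      simp only
      rw [hsin, Real.sq_sqrt hu0.le]
    have hP : 0 < 1 - k2 * u := by nlinarith
    have hQ : 0 < 1 - u := by linarith
    have hCnn : 0 ≤ CΛ := by rw [hCΛ]; positivity
    clear_value u du
    have hval : CΛ * (g (φ r) * (1 / Real.sqrt (1 - u) * (1 / (2 * Real.sqrt u) * du)))
        = 1 / (r * Real.sqrt (f r)) := by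
      rw [hgval]
      have hL : 0 ≤ CΛ * (1 / Real.sqrt (1 - k2 * u) *
          (1 / Real.sqrt (1 - u) * (1 / (2 * Real.sqrt u) * du))) := by
        have h1' : (0:ℝ) ≤ 1 / Real.sqrt (1 - k2 * u) := by positivity
        have h2'' : (0:ℝ) ≤ 1 / Real.sqrt (1 - u) := by positivity
        have h3'' : (0:ℝ) ≤ 1 / (2 * Real.sqrt u) := by positivity
        exact mul_nonneg hCnn (mul_nonneg h1' (mul_nonneg h2'' (mul_nonneg h3'' hdu0.le)))
      have hR : (0:ℝ) ≤ 1 / (r * Real.sqrt (f r)) := by positivity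
      refine (sq_eq_sq₀ hL hR).mp ?_
      have hC2 : CΛ ^ 2 = 12 / (Λ * (r₁ * (r₂ - r₃))) := by
        rw [hCΛ, div_pow, mul_pow,
          Real.sq_sqrt (by positivity : (0:ℝ) ≤ 3 / Λ),
          Real.sq_sqrt (mul_nonneg hr1pos.le h23.le)]
        field_simp
        ring
      have e1 : (CΛ * (1 / Real.sqrt (1 - k2 * u) *
          (1 / Real.sqrt (1 - u) * (1 / (2 * Real.sqrt u) * du)))) ^ 2
          = CΛ ^ 2 * ((Real.sqrt (1 - k2 * u) ^ 2)⁻¹ *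
            ((Real.sqrt (1 - u) ^ 2)⁻¹ * ((Real.sqrt u ^ 2)⁻¹ / 4 * du ^ 2))) := by
        ring
      have e2 : (1 / (r * Real.sqrt (f r))) ^ 2 = (r ^ 2 * Real.sqrt (f r) ^ 2)⁻¹ := by
        rw [div_pow, mul_pow, one_pow, one_div]
      have hPv : 1 - k2 * u = r₂ * (r - r₃) / (r * (r₂ - r₃)) := by
        rw [hk2, hu]; field_simp; ring
      have hQv : (1:ℝ) - u = r₂ * (r₁ - r) / (r * (r₁ - r₂)) := by
        rw [hu]; field_simp; ring
      rw [e1, e2, Real.sq_sqrt hP.le, Real.sq_sqrt hQ.le, Real.sq_sqrt hu0.le,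
        Real.sq_sqrt hfr0.le, hC2, hPv, hQv, hu, hdu, hfr]
      field_simp
      ring
    exact hval ▸ hcomp
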